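/- Let (Ω, F, P) be a probability space with a filtration (F_n)_{n≥1}. Let f : ℝ → ℝ be differentiable, let θ* ∈ ℝ with f′(θ*) = 0, and suppose there is κ > 1/3 such that f′(θ)(θ − θ*) ≥ κ (θ − θ*)² for all θ ∈ ℝ. Set a_n = 1/n and δ_n = n^{−1/6} for n ≥ 1. Let (θ_n), (b_n), (η_n), (Δ_n) be square-integrable real-valued random sequences such that θ_n and b_n are F_n-measurable, η_n and Δ_n are F_{n+1}-measurable, and θ_{n+1} = θ_n − a_n (f′(θ_n) + b_n + η_n + Δ_n) for all n ≥ 1. Assume there are constants C₀ ≥ 0, F_max ≥ 0, C₁ ≥ 0, α ≥ 1/2 and 0 < C₂ < 4κ such that almost surely, for all n ≥ 1: |b_n| ≤ C₀ δ_n²; E[η_n | F_n] = 0; E[Δ_n² | F_n] ≤ (F_max² C₁ / (2 δ_n²)) n^{−2α}; and E[(f′(θ_n) + b_n + η_n + Δ_n)² | F_n] ≤ 4 F_max²/δ_n² + C₂ (θ_n − θ*)². Then limsup_{n→∞} n^{2/3} E[(θ_n − θ*)²] < ∞, i.e., E[(θ_n − θ*)²] = O(n^{−2/3}). -/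

import Mathlib

open MeasureTheory Filter

section Helpers
variable {Ω : Type*} {m0 : MeasurableSpace Ω} {P : Measure Ω} [IsProbabilityMeasure P]

lemma my_integrable_of_sq {f : Ω → ℝ} (hf : AEStronglyMeasurable f P)
    (h2 : Integrable (fun ω => f ω ^ 2) P) : Integrable f P := by
  refine Integrable.mono' (g := fun ω => (1 + f ω ^ 2) / 2)
    (((integrable_const (1:ℝ)).add h2).div_const 2) hf ?_
  filter_upwards with ω
  rw [Real.norm_eq_abs]
  nlinarith [sq_nonneg (1 - |f ω|), sq_abs (f ω), abs_nonneg (f ω)]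

omit [IsProbabilityMeasure P] in
lemma my_integrable_mul_of_sq {f g : Ω → ℝ} (hf : AEStronglyMeasurable f P)
    (hg : AEStronglyMeasurable g P)
    (hf2 : Integrable (fun ω => f ω ^ 2) P) (hg2 : Integrable (fun ω => g ω ^ 2) P) :
    Integrable (fun ω => f ω * g ω) P := by
  refine Integrable.mono' (g := fun ω => (f ω ^ 2 + g ω ^ 2) / 2)
    ((hf2.add hg2).div_const 2) (hf.mul hg) ?_
  filter_upwards with ω
  rw [Real.norm_eq_abs, abs_mul]
  nlinarith [sq_nonneg (|f ω| - |g ω|), sq_abs (f ω), sq_abs (g ω)]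

end Helpers

lemma my_young {u v ε : ℝ} (hε : 0 < ε) : u * v ≤ ε * u ^ 2 + v ^ 2 / (4 * ε) := by
  rw [← sub_nonneg]
  have h : ε * u ^ 2 + v ^ 2 / (4 * ε) - u * v = (2 * ε * u - v) ^ 2 / (4 * ε) := by
    field_simp; ring
  rw [h]; positivity

/-- The elementary numeric step `1/n^{2/3} - (2/3)/n^{5/3} ≤ 1/(n+1)^{2/3}`. -/
lemma my_rpow_step (n : ℕ) (hn : 1 ≤ n) :
    1 / (n:ℝ) ^ ((2:ℝ)/3) - (2/3) / (n:ℝ) ^ ((5:ℝ)/3) ≤ 1 / ((n:ℝ) + 1) ^ ((2:ℝ)/3) := by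
  have hn1 : (1:ℝ) ≤ (n:ℝ) := by exact_mod_cast hn
  have hn0 : (0:ℝ) < (n:ℝ) := by linarith
  set t : ℝ := (n:ℝ) ^ ((1:ℝ)/3) with ht_def
  set s : ℝ := ((n:ℝ) + 1) ^ ((1:ℝ)/3) with hs_def
  have ht1 : (1:ℝ) ≤ t := by
    calc (1:ℝ) = (1:ℝ) ^ ((1:ℝ)/3) := by simp
    _ ≤ t := Real.rpow_le_rpow zero_le_one hn1 (by norm_num)
  have hts : t ≤ s := Real.rpow_le_rpow hn0.le (by linarith) (by norm_num)
  have ht0 : (0:ℝ) < t := by linarith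
  have hs0 : (0:ℝ) < s := by linarith
  have ht3 : t ^ 3 = (n:ℝ) := by
    rw [ht_def, ← Real.rpow_natCast ((n:ℝ) ^ ((1:ℝ)/3)) 3, ← Real.rpow_mul hn0.le]
    norm_num
  have hs3 : s ^ 3 = (n:ℝ) + 1 := by
    rw [hs_def, ← Real.rpow_natCast (((n:ℝ)+1) ^ ((1:ℝ)/3)) 3, ← Real.rpow_mul (by linarith)]
    norm_num
  have hst3 : s ^ 3 = t ^ 3 + 1 := by rw [hs3, ht3]
  have h23 : (n:ℝ) ^ ((2:ℝ)/3) = t ^ 2 := by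
    rw [ht_def, show (2:ℝ)/3 = (1/3) * ((2:ℕ):ℝ) by push_cast; norm_num, Real.rpow_mul hn0.le,
      Real.rpow_natCast]
  have h53 : (n:ℝ) ^ ((5:ℝ)/3) = t ^ 5 := by
    rw [ht_def, show (5:ℝ)/3 = (1/3) * ((5:ℕ):ℝ) by push_cast; norm_num, Real.rpow_mul hn0.le,
      Real.rpow_natCast]
  have h23' : ((n:ℝ) + 1) ^ ((2:ℝ)/3) = s ^ 2 := by
    rw [hs_def, show (2:ℝ)/3 = (1/3) * ((2:ℕ):ℝ) by push_cast; norm_num, Real.rpow_mul (by linarith),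
      Real.rpow_natCast]
  rw [h23, h53, h23']
  -- key algebra
  have key0 : 3 * t ^ 3 + 2 - 3 * t * s ^ 2 = (s - t) * (2 * s ^ 2 - s * t - t ^ 2) := by
    linear_combination (-2 : ℝ) * hst3
  have hfac : (0:ℝ) ≤ (s - t) * (2 * s ^ 2 - s * t - t ^ 2) := by
    have h1 : 0 ≤ s - t := by linarith
    have h2 : 0 ≤ 2 * s ^ 2 - s * t - t ^ 2 := by nlinarith
    exact mul_nonneg h1 h2
  have hst : 3 * t * s ^ 2 ≤ 3 * t ^ 3 + 2 := by linarith
  have main : (3 * t ^ 3 - 2) * s ^ 2 ≤ 3 * t ^ 5 := by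
    nlinarith [mul_le_mul_of_nonneg_left hst (show (0:ℝ) ≤ 3 * t ^ 3 - 2 by nlinarith),
      sq_nonneg t, ht0.le]
  have expand : 1 / t ^ 2 - (2:ℝ)/3 / t ^ 5 = (3 * t ^ 3 - 2) / (3 * t ^ 5) := by
    field_simp
  rw [expand, div_le_div_iff₀ (by positivity) (by positivity)]
  nlinarith [main]

set_option maxHeartbeats 2000000 in
/-- `O(n^{-2/3})` convergence rate of the non-stationary Kiefer–Wolfowitz recursion,
with step sizes `a_n = 1/n` and finite-difference widths `δ_n = n^{-1/6}`. -/
theorem nonstationary_kw_rate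
    {Ω : Type*} {m0 : MeasurableSpace Ω} {P : Measure Ω} [IsProbabilityMeasure P]
    (F : Filtration ℕ m0)
    (f f' : ℝ → ℝ)
    (hderiv : ∀ x, HasDerivAt f (f' x) x)
    (θstar : ℝ) (hcrit : f' θstar = 0)
    (κ : ℝ) (hκ : 1 / 3 < κ)
    (hconv : ∀ θ, κ * (θ - θstar) ^ 2 ≤ f' θ * (θ - θstar))
    (a δ : ℕ → ℝ)
    (ha : ∀ n, 1 ≤ n → a n = 1 / (n : ℝ))
    (hδ : ∀ n, 1 ≤ n → δ n = (n : ℝ) ^ (-(1 : ℝ) / 6))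
    (θseq b η Δ : ℕ → Ω → ℝ)
    (hθ_sq : ∀ n, Integrable (fun ω => (θseq n ω) ^ 2) P)
    (hb_sq : ∀ n, Integrable (fun ω => (b n ω) ^ 2) P)
    (hη_sq : ∀ n, Integrable (fun ω => (η n ω) ^ 2) P)
    (hΔ_sq : ∀ n, Integrable (fun ω => (Δ n ω) ^ 2) P)
    (hθ_meas : ∀ n, Measurable[F n] (θseq n))
    (hb_meas : ∀ n, Measurable[F n] (b n))
    (hη_meas : ∀ n, Measurable[F (n + 1)] (η n))
    (hΔ_meas : ∀ n, Measurable[F (n + 1)] (Δ n))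
    (hrec : ∀ n, 1 ≤ n → ∀ ω,
      θseq (n + 1) ω = θseq n ω - a n * (f' (θseq n ω) + b n ω + η n ω + Δ n ω))
    (C₀ Fmax C₁ α C₂ : ℝ)
    (hC₀ : 0 ≤ C₀) (hFmax : 0 ≤ Fmax) (hC₁ : 0 ≤ C₁) (hα : 1 / 2 ≤ α)
    (hC₂_pos : 0 < C₂) (hC₂ : C₂ < 4 * κ)
    (hb_bound : ∀ n, 1 ≤ n → ∀ᵐ ω ∂P, |b n ω| ≤ C₀ * (δ n) ^ 2)
    (hη_cond : ∀ n, 1 ≤ n → P[η n | F n] =ᵐ[P] 0)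
    (hΔ_cond : ∀ n, 1 ≤ n → ∀ᵐ ω ∂P,
      (P[(fun ω' => (Δ n ω') ^ 2) | F n]) ω ≤
        (Fmax ^ 2 * C₁ / (2 * (δ n) ^ 2)) * (n : ℝ) ^ (-(2 : ℝ) * α))
    (hincr_cond : ∀ n, 1 ≤ n → ∀ᵐ ω ∂P,
      (P[(fun ω' => (f' (θseq n ω') + b n ω' + η n ω' + Δ n ω') ^ 2) | F n]) ω ≤
        4 * Fmax ^ 2 / (δ n) ^ 2 + C₂ * (θseq n ω - θstar) ^ 2) :
    ∃ C : ℝ, ∀ᶠ n : ℕ in atTop,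
      (n : ℝ) ^ ((2 : ℝ) / 3) * ∫ ω, (θseq n ω - θstar) ^ 2 ∂P ≤ C := by
  classical
  set e : ℕ → ℝ := fun n => ∫ ω, (θseq n ω - θstar) ^ 2 ∂P with he_def
  have he_nonneg : ∀ n, 0 ≤ e n := fun n => integral_nonneg fun ω => sq_nonneg _
  set ε : ℝ := (κ - 1/3) / 4 with hε_def
  have hε : 0 < ε := by rw [hε_def]; linarith
  set K : ℝ := C₀ ^ 2 / (2 * ε) + Fmax ^ 2 * C₁ / (4 * ε) + 4 * Fmax ^ 2 with hK_def
  have hK : 0 ≤ K := by positivity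
  set c : ℝ := κ + 1/3 with hc_def
  have hcε : c = 2 * κ - 4 * ε := by rw [hc_def, hε_def]; ring
  -- Part 1: the one-step recursion inequality in expectation
  have key : ∀ n : ℕ, 1 ≤ n →
      e (n+1) ≤ (1 - c / (n:ℝ) + C₂ / (n:ℝ) ^ 2) * e n + K / (n:ℝ) ^ ((5:ℝ)/3) := by
    intro n hn
    have hn1 : (1:ℝ) ≤ (n:ℝ) := by exact_mod_cast hn
    have hn0 : (0:ℝ) < (n:ℝ) := by linarith
    set t : ℝ := (n:ℝ) ^ ((1:ℝ)/3) with ht_def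
    have ht1 : (1:ℝ) ≤ t := by
      calc (1:ℝ) = (1:ℝ) ^ ((1:ℝ)/3) := by simp
      _ ≤ t := Real.rpow_le_rpow zero_le_one hn1 (by norm_num)
    have ht0 : (0:ℝ) < t := by linarith
    have ht3 : t ^ 3 = (n:ℝ) := by
      rw [ht_def, ← Real.rpow_natCast ((n:ℝ) ^ ((1:ℝ)/3)) 3, ← Real.rpow_mul hn0.le]
      norm_num
    have h53 : (n:ℝ) ^ ((5:ℝ)/3) = t ^ 5 := by
      rw [ht_def, show (5:ℝ)/3 = (1/3) * ((5:ℕ):ℝ) by push_cast; norm_num,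
        Real.rpow_mul hn0.le, Real.rpow_natCast]
    have hδ2 : (δ n) ^ 2 = t⁻¹ := by
      have h1 : (δ n) ^ 2 = (n:ℝ) ^ (-((1:ℝ)/3)) := by
        rw [hδ n hn, ← Real.rpow_natCast ((n:ℝ) ^ (-(1:ℝ)/6)) 2, ← Real.rpow_mul hn0.le]
        norm_num
      rw [h1, Real.rpow_neg hn0.le, ht_def]
    -- the decay rate of the mixing error
    set r : ℝ := (n:ℝ) ^ (-(2:ℝ) * α) with hr_def
    have hr0 : 0 ≤ r := Real.rpow_nonneg hn0.le _
    have hr3 : r ≤ 1 / t ^ 3 := by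
      rw [ht3, hr_def]
      have h1 : (n:ℝ) ^ (-(2:ℝ) * α) ≤ (n:ℝ) ^ (-(1:ℝ)) :=
        Real.rpow_le_rpow_of_exponent_le hn1 (by linarith)
      rw [Real.rpow_neg_one] at h1
      rw [one_div]
      exact h1
    -- random variables
    set X : Ω → ℝ := fun ω => θseq n ω - θstar with hX_def
    set g : Ω → ℝ := fun ω => f' (θseq n ω) + b n ω + η n ω + Δ n ω with hg_def
    have hg_eq : ∀ ω, g ω = (n:ℝ) * (θseq n ω - θseq (n+1) ω) := by
      intro ω
      rw [hrec n hn ω, ha n hn]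
      simp only [hg_def]
      field_simp
      ring
    -- measurability
    have hθm : AEStronglyMeasurable (θseq n) P :=
      ((hθ_meas n).mono (F.le n) le_rfl).aestronglyMeasurable
    have hθm' : AEStronglyMeasurable (θseq (n+1)) P :=
      ((hθ_meas (n+1)).mono (F.le (n+1)) le_rfl).aestronglyMeasurable
    have hXm : AEStronglyMeasurable X P := hθm.sub aestronglyMeasurable_const
    have hbm : AEStronglyMeasurable (b n) P :=
      ((hb_meas n).mono (F.le n) le_rfl).aestronglyMeasurable
    have hηm : AEStronglyMeasurable (η n) P :=
      ((hη_meas n).mono (F.le (n+1)) le_rfl).aestronglyMeasurable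
    have hΔm : AEStronglyMeasurable (Δ n) P :=
      ((hΔ_meas n).mono (F.le (n+1)) le_rfl).aestronglyMeasurable
    have hgm : AEStronglyMeasurable g P := by
      have hfe : g = fun ω => (n:ℝ) * (θseq n ω - θseq (n+1) ω) := funext hg_eq
      rw [hfe]
      exact aestronglyMeasurable_const.mul (hθm.sub hθm')
    -- integrability
    have hX2 : Integrable (fun ω => X ω ^ 2) P := by
      refine Integrable.mono' (g := fun ω => 2 * θseq n ω ^ 2 + 2 * θstar ^ 2)
        (((hθ_sq n).const_mul 2).add (integrable_const _))
        (by simp only [pow_two]; exact hXm.mul hXm) ?_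
      filter_upwards with ω
      simp only [hX_def, Real.norm_eq_abs]
      rw [abs_of_nonneg (sq_nonneg _)]
      nlinarith [sq_nonneg (θseq n ω + θstar)]
    have hg2 : Integrable (fun ω => g ω ^ 2) P := by
      have hfe : (fun ω => g ω ^ 2) =
          fun ω => (n:ℝ) ^ 2 * (θseq n ω - θseq (n+1) ω) ^ 2 := by
        funext ω; rw [hg_eq ω]; ring
      rw [hfe]
      refine Integrable.const_mul ?_ _
      refine Integrable.mono' (g := fun ω => 2 * θseq n ω ^ 2 + 2 * θseq (n+1) ω ^ 2)
        (((hθ_sq n).const_mul 2).add ((hθ_sq (n+1)).const_mul 2))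
        (by simp only [pow_two]; exact (hθm.sub hθm').mul (hθm.sub hθm')) ?_
      filter_upwards with ω
      simp only [Real.norm_eq_abs]
      rw [abs_of_nonneg (sq_nonneg _)]
      nlinarith [sq_nonneg (θseq n ω + θseq (n+1) ω)]
    have hη_int : Integrable (η n) P := my_integrable_of_sq hηm (hη_sq n)
    have hXg : Integrable (fun ω => X ω * g ω) P := my_integrable_mul_of_sq hXm hgm hX2 hg2
    have hXb : Integrable (fun ω => X ω * b n ω) P :=
      my_integrable_mul_of_sq hXm hbm hX2 (hb_sq n)
    have hXη : Integrable (fun ω => X ω * η n ω) P :=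
      my_integrable_mul_of_sq hXm hηm hX2 (hη_sq n)
    have hXΔ : Integrable (fun ω => X ω * Δ n ω) P :=
      my_integrable_mul_of_sq hXm hΔm hX2 (hΔ_sq n)
    have hXf' : Integrable (fun ω => X ω * f' (θseq n ω)) P := by
      have hfe : (fun ω => X ω * f' (θseq n ω)) =
          fun ω => X ω * g ω - X ω * b n ω - X ω * η n ω - X ω * Δ n ω := by
        funext ω; simp only [hg_def]; ring
      rw [hfe]
      exact ((hXg.sub hXb).sub hXη).sub hXΔ
    -- the martingale term integrates to zero
    have hXsm : StronglyMeasurable[F n] X :=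
      ((hθ_meas n).sub measurable_const).stronglyMeasurable
    have hintXη : ∫ ω, X ω * η n ω ∂P = 0 := by
      have hmul : P[X * η n | F n] =ᵐ[P] X * P[η n | F n] :=
        condExp_mul_of_stronglyMeasurable_left hXsm (by exact hXη) hη_int
      have h3 : X * P[η n | F n] =ᵐ[P] 0 := by
        filter_upwards [hη_cond n hn] with ω hω
        simp only [Pi.mul_apply, Pi.zero_apply] at hω ⊢
        rw [hω, mul_zero]
      calc ∫ ω, X ω * η n ω ∂P = ∫ ω, (P[X * η n | F n]) ω ∂P :=
            (integral_condExp (F.le n)).symm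
      _ = ∫ ω, (0:Ω → ℝ) ω ∂P := integral_congr_ae (hmul.trans h3)
      _ = 0 := by simp
    -- bound on E[Δ²]
    have hΔ2_bound : ∫ ω, Δ n ω ^ 2 ∂P ≤ Fmax ^ 2 * C₁ / (2 * (δ n) ^ 2) * r := by
      rw [← integral_condExp (F.le n) (f := fun ω => Δ n ω ^ 2)]
      calc ∫ ω, (P[fun ω' => Δ n ω' ^ 2 | F n]) ω ∂P
          ≤ ∫ _ω, (Fmax ^ 2 * C₁ / (2 * (δ n) ^ 2) * r) ∂P :=
            integral_mono_ae integrable_condExp (integrable_const _) (hΔ_cond n hn)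
      _ = Fmax ^ 2 * C₁ / (2 * (δ n) ^ 2) * r := by simp
    -- bound on E[g²]
    have hG : ∫ ω, g ω ^ 2 ∂P ≤ 4 * Fmax ^ 2 / (δ n) ^ 2 + C₂ * e n := by
      have hrhs_int : Integrable (fun ω => 4 * Fmax ^ 2 / (δ n) ^ 2 + C₂ * X ω ^ 2) P :=
        (integrable_const _).add (hX2.const_mul _)
      calc ∫ ω, g ω ^ 2 ∂P = ∫ ω, (P[fun ω' => g ω' ^ 2 | F n]) ω ∂P :=
            (integral_condExp (F.le n)).symm
      _ ≤ ∫ ω, (4 * Fmax ^ 2 / (δ n) ^ 2 + C₂ * X ω ^ 2) ∂P := by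
            refine integral_mono_ae integrable_condExp hrhs_int ?_
            filter_upwards [hincr_cond n hn] with ω hω
            simpa only [hg_def, hX_def] using hω
      _ = 4 * Fmax ^ 2 / (δ n) ^ 2 + C₂ * e n := by
            rw [integral_add (integrable_const _) (hX2.const_mul _), integral_const_mul]
            simp [he_def, hX_def]
    -- bound on |E[Xb]|
    set β : ℝ := (C₀ * (δ n) ^ 2) ^ 2 / (4 * ε) with hβ_def
    have hBbound : |∫ ω, X ω * b n ω ∂P| ≤ ε * e n + β := by
      have h1 : |∫ ω, X ω * b n ω ∂P| ≤ ∫ ω, |X ω * b n ω| ∂P :=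
        norm_integral_le_integral_norm (μ := P) (fun ω => X ω * b n ω)
      have h2 : ∫ ω, |X ω * b n ω| ∂P ≤ ∫ ω, (ε * X ω ^ 2 + (C₀ * (δ n) ^ 2) ^ 2 / (4 * ε)) ∂P := by
        refine integral_mono_ae hXb.abs ((hX2.const_mul ε).add (integrable_const _)) ?_
        filter_upwards [hb_bound n hn] with ω hω
        show |X ω * b n ω| ≤ ε * X ω ^ 2 + (C₀ * (δ n) ^ 2) ^ 2 / (4 * ε)
        have hb2 : b n ω ^ 2 ≤ (C₀ * (δ n) ^ 2) ^ 2 := by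
          have := abs_nonneg (b n ω)
          nlinarith [sq_abs (b n ω)]
        rw [abs_mul]
        calc |X ω| * |b n ω| ≤ ε * |X ω| ^ 2 + |b n ω| ^ 2 / (4 * ε) := my_young hε
        _ = ε * X ω ^ 2 + b n ω ^ 2 / (4 * ε) := by rw [sq_abs, sq_abs]
        _ ≤ ε * X ω ^ 2 + (C₀ * (δ n) ^ 2) ^ 2 / (4 * ε) := by
              have h4 : (0:ℝ) < 4 * ε := by linarith
              have := (div_le_div_iff_of_pos_right h4).mpr hb2
              linarith
      have h3 : ∫ ω, (ε * X ω ^ 2 + (C₀ * (δ n) ^ 2) ^ 2 / (4 * ε)) ∂P = ε * e n + β := by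
        rw [integral_add (hX2.const_mul ε) (integrable_const _), integral_const_mul]
        simp [he_def, hX_def, hβ_def]
      linarith [h1.trans h2]
    -- bound on |E[XΔ]|
    set γ : ℝ := (Fmax ^ 2 * C₁ / (2 * (δ n) ^ 2) * r) / (4 * ε) with hγ_def
    have hCbound : |∫ ω, X ω * Δ n ω ∂P| ≤ ε * e n + γ := by
      have h1 : |∫ ω, X ω * Δ n ω ∂P| ≤ ∫ ω, |X ω * Δ n ω| ∂P :=
        norm_integral_le_integral_norm (μ := P) (fun ω => X ω * Δ n ω)
      have h2 : ∫ ω, |X ω * Δ n ω| ∂P ≤ ∫ ω, (ε * X ω ^ 2 + Δ n ω ^ 2 / (4 * ε)) ∂P := by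
        refine integral_mono hXΔ.abs ((hX2.const_mul ε).add ((hΔ_sq n).div_const _)) ?_
        intro ω
        show |X ω * Δ n ω| ≤ ε * X ω ^ 2 + Δ n ω ^ 2 / (4 * ε)
        rw [abs_mul]
        calc |X ω| * |Δ n ω| ≤ ε * |X ω| ^ 2 + |Δ n ω| ^ 2 / (4 * ε) := my_young hε
        _ = ε * X ω ^ 2 + Δ n ω ^ 2 / (4 * ε) := by rw [sq_abs, sq_abs]
      have h3 : ∫ ω, (ε * X ω ^ 2 + Δ n ω ^ 2 / (4 * ε)) ∂P
          = ε * e n + (∫ ω, Δ n ω ^ 2 ∂P) / (4 * ε) := by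
        rw [integral_add (hX2.const_mul ε) ((hΔ_sq n).div_const _), integral_const_mul,
          integral_div]
      have h4 : (∫ ω, Δ n ω ^ 2 ∂P) / (4 * ε) ≤ γ := by
        rw [hγ_def]
        exact (div_le_div_iff_of_pos_right (show (0:ℝ) < 4 * ε by linarith)).mpr hΔ2_bound
      linarith [h1.trans (h2.trans_eq h3)]
    -- lower bound on E[X f'(θ)]
    have hA : κ * e n ≤ ∫ ω, X ω * f' (θseq n ω) ∂P := by
      have h1 : ∫ ω, κ * X ω ^ 2 ∂P ≤ ∫ ω, X ω * f' (θseq n ω) ∂P := by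
        refine integral_mono (hX2.const_mul κ) hXf' fun ω => ?_
        simp only [hX_def]
        rw [mul_comm (θseq n ω - θstar)]
        exact hconv (θseq n ω)
      rw [integral_const_mul] at h1
      have h2 : (∫ ω, X ω ^ 2 ∂P) = e n := by simp [he_def, hX_def]
      rw [h2] at h1
      exact h1
    -- expansion of e (n+1)
    have hid : e (n+1) = e n - 2 * a n * (∫ ω, X ω * g ω ∂P) + (a n) ^ 2 * ∫ ω, g ω ^ 2 ∂P := by
      have hptw : ∀ ω, (θseq (n+1) ω - θstar) ^ 2
          = X ω ^ 2 - 2 * a n * (X ω * g ω) + (a n) ^ 2 * g ω ^ 2 := by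
        intro ω; rw [hrec n hn ω]; simp only [hX_def, hg_def]; ring
      have h1 : e (n+1) = ∫ ω, (X ω ^ 2 - 2 * a n * (X ω * g ω) + (a n) ^ 2 * g ω ^ 2) ∂P := by
        simp only [he_def]
        exact integral_congr_ae (Eventually.of_forall hptw)
      have i0 : Integrable (fun ω => 2 * a n * (X ω * g ω)) P := hXg.const_mul _
      have i1 : Integrable (fun ω => X ω ^ 2 - 2 * a n * (X ω * g ω)) P := hX2.sub i0
      have i2 : Integrable (fun ω => (a n) ^ 2 * g ω ^ 2) P := hg2.const_mul _
      rw [h1, integral_add i1 i2, integral_sub hX2 i0, integral_const_mul, integral_const_mul]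
    have hsplit : ∫ ω, X ω * g ω ∂P
        = (∫ ω, X ω * f' (θseq n ω) ∂P) + (∫ ω, X ω * b n ω ∂P) + (∫ ω, X ω * Δ n ω ∂P) := by
      have hptw : ∀ ω, X ω * g ω
          = X ω * f' (θseq n ω) + X ω * b n ω + X ω * η n ω + X ω * Δ n ω := by
        intro ω; simp only [hg_def]; ring
      have i3 : Integrable (fun ω => X ω * f' (θseq n ω) + X ω * b n ω) P := hXf'.add hXb
      have i4 : Integrable (fun ω => X ω * f' (θseq n ω) + X ω * b n ω + X ω * η n ω) P :=
        i3.add hXη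
      rw [integral_congr_ae (Eventually.of_forall hptw), integral_add i4 hXΔ,
        integral_add i3 hXη, integral_add hXf' hXb, hintXη, add_zero]
    -- assemble
    have ha_val : a n = 1 / t ^ 3 := by rw [ha n hn, ht3]
    have hstep1 : e (n+1) ≤ e n - 2 * (1/t^3) * ((κ - 2*ε) * e n - β - γ)
        + (1/t^3) ^ 2 * (4 * Fmax ^ 2 * t + C₂ * e n) := by
      rw [hid, hsplit, ha_val]
      have hS : (κ - 2*ε) * e n - β - γ
          ≤ (∫ ω, X ω * f' (θseq n ω) ∂P) + (∫ ω, X ω * b n ω ∂P) + (∫ ω, X ω * Δ n ω ∂P) := by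
        have hB1 := (abs_le.mp hBbound).1
        have hC1 := (abs_le.mp hCbound).1
        linarith
      have hG' : (∫ ω, g ω ^ 2 ∂P) ≤ 4 * Fmax ^ 2 * t + C₂ * e n := by
        have heq : 4 * Fmax ^ 2 / (δ n) ^ 2 = 4 * Fmax ^ 2 * t := by
          rw [hδ2]; field_simp
        rw [heq] at hG
        exact hG
      have hm1 := mul_le_mul_of_nonneg_left hS (show (0:ℝ) ≤ 2 * (1/t^3) by positivity)
      have hm2 := mul_le_mul_of_nonneg_left hG' (show (0:ℝ) ≤ (1/t^3) ^ 2 by positivity)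
      linarith
    -- final algebra in t
    have hβval : β = C₀ ^ 2 * (1/t)^2 / (4 * ε) := by rw [hβ_def, hδ2]; ring_nf
    rw [h53]
    have hx_eq : (n:ℝ) = t ^ 3 := ht3.symm
    rw [hx_eq]
    have hγle : 2 * (1/t^3) * γ ≤ Fmax ^ 2 * C₁ / (4 * ε) / t ^ 5 := by
      have h1 : 2 * (1/t^3) * γ = (Fmax ^ 2 * C₁ / (4 * ε)) * (r / t ^ 2) := by
        rw [hγ_def, hδ2]
        field_simp [hε.ne', ht0.ne']
      have h2 : r / t ^ 2 ≤ (1/t^3) / t ^ 2 := by gcongr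
      rw [h1]
      calc (Fmax ^ 2 * C₁ / (4 * ε)) * (r / t ^ 2)
          ≤ (Fmax ^ 2 * C₁ / (4 * ε)) * ((1/t^3) / t ^ 2) := by
            refine mul_le_mul_of_nonneg_left h2 ?_
            have h4 : (0:ℝ) < 4 * ε := by linarith
            positivity
      _ = Fmax ^ 2 * C₁ / (4 * ε) / t ^ 5 := by
            rw [div_div, ← pow_add, mul_one_div]
    -- conclude the key inequality
    have hβle : 2 * (1/t^3) * β = C₀ ^ 2 / (2 * ε) / t ^ 5 := by
      rw [hβval]; field_simp; ring
    have hfin : e n - 2 * (1/t^3) * ((κ - 2*ε) * e n - β - γ)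
        + (1/t^3) ^ 2 * (4 * Fmax ^ 2 * t + C₂ * e n)
        ≤ (1 - c / t ^ 3 + C₂ / (t ^ 3) ^ 2) * e n + K / t ^ 5 := by
      have hexp : e n - 2 * (1/t^3) * ((κ - 2*ε) * e n - β - γ)
          + (1/t^3) ^ 2 * (4 * Fmax ^ 2 * t + C₂ * e n)
          = (1 - (2*κ - 4*ε) / t ^ 3 + C₂ / (t ^ 3) ^ 2) * e n
            + 2 * (1/t^3) * β + 2 * (1/t^3) * γ + 4 * Fmax ^ 2 / t ^ 5 := by
        field_simp
        ring
      rw [hexp, hcε, hK_def]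
      have : C₀ ^ 2 / (2 * ε) / t ^ 5 + Fmax ^ 2 * C₁ / (4 * ε) / t ^ 5 + 4 * Fmax ^ 2 / t ^ 5
          = (C₀ ^ 2 / (2 * ε) + Fmax ^ 2 * C₁ / (4 * ε) + 4 * Fmax ^ 2) / t ^ 5 := by
        field_simp
      linarith [hβle, hγle]
    exact hstep1.trans hfin
  -- Part 2: induction to deduce the O(n^{-2/3}) rate
  have hγ2 : (0:ℝ) < (κ - 1/3) / 2 := by linarith
  set c' : ℝ := 2/3 + (κ - 1/3)/2 with hc'_def
  have hc'pos : (0:ℝ) < c' := by rw [hc'_def]; linarith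
  obtain ⟨N, hN⟩ := exists_nat_ge (max (max (C₂ / ((κ - 1/3)/2)) c') 1)
  have hN1 : 1 ≤ N := by
    have h1 : (1:ℝ) ≤ (N:ℝ) := le_trans (le_max_right _ _) hN
    exact_mod_cast h1
  have hNc' : c' ≤ (N:ℝ) := le_trans (le_trans (le_max_right _ _) (le_max_left _ _)) hN
  have hNC₂ : C₂ / ((κ - 1/3)/2) ≤ (N:ℝ) :=
    le_trans (le_trans (le_max_left _ _) (le_max_left _ _)) hN
  have step : ∀ n : ℕ, N ≤ n → e (n+1) ≤ (1 - c'/(n:ℝ)) * e n + K / (n:ℝ) ^ ((5:ℝ)/3) := by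
    intro n hn
    have hn1 : 1 ≤ n := le_trans hN1 hn
    have hx1 : (1:ℝ) ≤ (n:ℝ) := by exact_mod_cast hn1
    have hx0 : (0:ℝ) < (n:ℝ) := by linarith
    have hxN : (N:ℝ) ≤ (n:ℝ) := by exact_mod_cast hn
    refine (key n hn1).trans ?_
    have hcoef : 1 - c/(n:ℝ) + C₂/(n:ℝ)^2 ≤ 1 - c'/(n:ℝ) := by
      have h1 : C₂ ≤ ((κ - 1/3)/2) * (n:ℝ) := by
        have h0 := (div_le_iff₀ hγ2).mp (hNC₂.trans hxN)
        nlinarith [h0]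
      have h2 : C₂/(n:ℝ)^2 ≤ ((κ - 1/3)/2)/(n:ℝ) := by
        rw [div_le_div_iff₀ (by positivity) hx0]
        nlinarith [h1, hx0]
      have h3 : c' / (n:ℝ) + ((κ - 1/3)/2)/(n:ℝ) = c / (n:ℝ) := by
        rw [hc'_def, hc_def]
        field_simp
        ring
      linarith
    exact (add_le_add_iff_right _).mpr (mul_le_mul_of_nonneg_right hcoef (he_nonneg n))
  set M : ℝ := max (K / ((κ - 1/3)/2)) (e N * (N:ℝ) ^ ((2:ℝ)/3)) with hM_def
  have hM0 : (0:ℝ) ≤ M :=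
    le_trans (mul_nonneg (he_nonneg N) (Real.rpow_nonneg (Nat.cast_nonneg N) _))
      (le_max_right _ _)
  have hMK : K ≤ M * ((κ - 1/3)/2) := by
    have h1 : K / ((κ - 1/3)/2) ≤ M := le_max_left _ _
    calc K = K / ((κ - 1/3)/2) * ((κ - 1/3)/2) := (div_mul_cancel₀ K hγ2.ne').symm
    _ ≤ M * ((κ - 1/3)/2) := mul_le_mul_of_nonneg_right h1 hγ2.le
  have claim : ∀ n : ℕ, N ≤ n → e n ≤ M / (n:ℝ) ^ ((2:ℝ)/3) := by
    intro n hn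
    induction n, hn using Nat.le_induction with
    | base =>
      have hN1' : (1:ℝ) ≤ (N:ℝ) := by exact_mod_cast hN1
      have hN0 : (0:ℝ) < (N:ℝ) := by linarith
      rw [le_div_iff₀ (Real.rpow_pos_of_pos hN0 _)]
      exact le_max_right _ _
    | succ n hNn ih =>
      have hn1 : 1 ≤ n := le_trans hN1 hNn
      have hx1 : (1:ℝ) ≤ (n:ℝ) := by exact_mod_cast hn1
      have hx0 : (0:ℝ) < (n:ℝ) := by linarith
      have hxN : (N:ℝ) ≤ (n:ℝ) := by exact_mod_cast hNn
      have hc'n : c' / (n:ℝ) ≤ 1 := by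
        rw [div_le_one hx0]; exact hNc'.trans hxN
      have h53 : (n:ℝ) ^ ((5:ℝ)/3) = (n:ℝ) ^ ((2:ℝ)/3) * (n:ℝ) := by
        rw [show (5:ℝ)/3 = 2/3 + 1 by norm_num, Real.rpow_add hx0, Real.rpow_one]
      have hp23 : (0:ℝ) < (n:ℝ) ^ ((2:ℝ)/3) := Real.rpow_pos_of_pos hx0 _
      have hp53 : (0:ℝ) < (n:ℝ) ^ ((5:ℝ)/3) := Real.rpow_pos_of_pos hx0 _
      have h1 := step n hNn
      have h2 : (1 - c'/(n:ℝ)) * e n ≤ (1 - c'/(n:ℝ)) * (M / (n:ℝ) ^ ((2:ℝ)/3)) :=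
        mul_le_mul_of_nonneg_left ih (by linarith)
      have h3 : (1 - c'/(n:ℝ)) * (M / (n:ℝ) ^ ((2:ℝ)/3)) + K / (n:ℝ) ^ ((5:ℝ)/3)
          = M / (n:ℝ) ^ ((2:ℝ)/3) - (M * c' - K) / (n:ℝ) ^ ((5:ℝ)/3) := by
        rw [h53]
        field_simp
        ring
      have h4 : (2:ℝ)/3 * M ≤ M * c' - K := by
        have hexp : M * c' = 2/3 * M + M * ((κ - 1/3)/2) := by rw [hc'_def]; ring
        linarith
      have h4' : (2:ℝ)/3 * M / (n:ℝ) ^ ((5:ℝ)/3) ≤ (M * c' - K) / (n:ℝ) ^ ((5:ℝ)/3) :=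
        (div_le_div_iff_of_pos_right hp53).mpr h4
      have hstep := my_rpow_step n hn1
      have hh := mul_le_mul_of_nonneg_left hstep hM0
      have e1 : M * (1 / (n:ℝ) ^ ((2:ℝ)/3) - 2/3 / (n:ℝ) ^ ((5:ℝ)/3))
          = M / (n:ℝ) ^ ((2:ℝ)/3) - 2/3 * M / (n:ℝ) ^ ((5:ℝ)/3) := by ring
      have e2 : M * (1 / ((n:ℝ) + 1) ^ ((2:ℝ)/3)) = M / ((n:ℝ) + 1) ^ ((2:ℝ)/3) := by ring
      have hcast : (((n+1):ℕ):ℝ) = (n:ℝ) + 1 := by push_cast; ring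
      rw [hcast]
      calc e (n+1) ≤ (1 - c'/(n:ℝ)) * e n + K / (n:ℝ) ^ ((5:ℝ)/3) := h1
      _ ≤ (1 - c'/(n:ℝ)) * (M / (n:ℝ) ^ ((2:ℝ)/3)) + K / (n:ℝ) ^ ((5:ℝ)/3) := by linarith
      _ = M / (n:ℝ) ^ ((2:ℝ)/3) - (M * c' - K) / (n:ℝ) ^ ((5:ℝ)/3) := h3
      _ ≤ M / (n:ℝ) ^ ((2:ℝ)/3) - 2/3 * M / (n:ℝ) ^ ((5:ℝ)/3) := by linarith
      _ ≤ M / ((n:ℝ) + 1) ^ ((2:ℝ)/3) := by linarith [hh, e1, e2]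
  refine ⟨M, ?_⟩
  rw [eventually_atTop]
  refine ⟨N, fun n hn => ?_⟩
  have hn1 : 1 ≤ n := le_trans hN1 hn
  have hx1 : (1:ℝ) ≤ (n:ℝ) := by exact_mod_cast hn1
  have hx0 : (0:ℝ) < (n:ℝ) := by linarith
  have hp : (0:ℝ) < (n:ℝ) ^ ((2:ℝ)/3) := Real.rpow_pos_of_pos hx0 _
  have h2 : e n * (n:ℝ) ^ ((2:ℝ)/3) ≤ M := (le_div_iff₀ hp).mp (claim n hn)
  show (n:ℝ) ^ ((2:ℝ)/3) * e n ≤ M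
  rw [mul_comm]
  exact h2
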